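/- arXiv:2401.04778 — 3 statements merged into one kernel-verified Lean document; each statement's English description precedes it below -/
import Mathlib

section
/- Let W be a random vector in ℝ^d and define k(x,y) = E[exp(i Wᵀ(x−y))], assumed real-valued (e.g. W symmetric). Then for any two probability measures P₁, P₂ on ℝ^d with characteristic functions Φ₁, Φ₂, the quantity E[k(X,X')] − E[k(X,Y')] − E[k(X',Y)] + E[k(Y,Y')], where X, X' ∼ P₁ and Y, Y' ∼ P₂ are mutually independent and independent of W, equals E[|Φ₁(W) − Φ₂(W)|²]. -/
open MeasureTheory Complex ComplexConjugate
open scoped RealInnerProductSpace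

set_option maxHeartbeats 1000000

namespace MMDaux

variable {d : ℕ}

noncomputable def e (w x : EuclideanSpace ℝ (Fin d)) : ℂ :=
  Complex.exp ((⟪w, x⟫ : ℝ) * Complex.I)

lemma cont_e : Continuous fun p : EuclideanSpace ℝ (Fin d) × EuclideanSpace ℝ (Fin d) =>
    e p.1 p.2 := by
  unfold e
  have h : Continuous fun p : EuclideanSpace ℝ (Fin d) × EuclideanSpace ℝ (Fin d) =>
      (⟪p.1, p.2⟫ : ℝ) := continuous_inner
  have h2 : Continuous fun p : EuclideanSpace ℝ (Fin d) × EuclideanSpace ℝ (Fin d) =>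
      ((⟪p.1, p.2⟫ : ℝ) : ℂ) * Complex.I :=
    (Complex.continuous_ofReal.comp h).mul continuous_const
  exact Complex.continuous_exp.comp h2

lemma cont_e' {α : Type*} [TopologicalSpace α] {f g : α → EuclideanSpace ℝ (Fin d)}
    (hf : Continuous f) (hg : Continuous g) : Continuous fun a => e (f a) (g a) := by
  unfold e
  have h : Continuous fun a => (⟪f a, g a⟫ : ℝ) := hf.inner hg
  have h2 : Continuous fun a => ((⟪f a, g a⟫ : ℝ) : ℂ) * Complex.I :=
    (Complex.continuous_ofReal.comp h).mul continuous_const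
  exact Complex.continuous_exp.comp h2

lemma norm_e (w x : EuclideanSpace ℝ (Fin d)) : ‖e w x‖ = 1 := by
  rw [e, Complex.norm_exp_ofReal_mul_I]

lemma e_sub (w x y : EuclideanSpace ℝ (Fin d)) : e w (x - y) = e w x * conj (e w y) := by
  rw [e, e, e, inner_sub_right, ← Complex.exp_conj, ← Complex.exp_add]
  congr 1
  simp only [map_mul, Complex.conj_ofReal, Complex.conj_I]
  push_cast
  ring

lemma sm_phi (Q : Measure (EuclideanSpace ℝ (Fin d))) [SFinite Q] :
    StronglyMeasurable fun w => ∫ y, e w y ∂Q :=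
  StronglyMeasurable.integral_prod_right (f := fun w y => e w y) cont_e.stronglyMeasurable

lemma norm_phi_le (Q : Measure (EuclideanSpace ℝ (Fin d))) [IsProbabilityMeasure Q]
    (w : EuclideanSpace ℝ (Fin d)) : ‖∫ y, e w y ∂Q‖ ≤ 1 := by
  calc ‖∫ y, e w y ∂Q‖ ≤ ∫ y, ‖e w y‖ ∂Q := norm_integral_le_integral_norm _
  _ = 1 := by simp only [norm_e]; simp

lemma int_bdd {α : Type*} [MeasurableSpace α] {μ : Measure α} [IsProbabilityMeasure μ]
    {f : α → ℂ} (hm : AEStronglyMeasurable f μ) (hb : ∀ a, ‖f a‖ ≤ 1) : Integrable f μ :=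
  (integrable_const (1 : ℝ)).mono' hm (Filter.Eventually.of_forall hb)

lemma lemA (μW P Q : Measure (EuclideanSpace ℝ (Fin d)))
    [IsProbabilityMeasure μW] [IsProbabilityMeasure P] [IsProbabilityMeasure Q] :
    ∫ x, ∫ y, (∫ w, e w (x - y) ∂μW) ∂Q ∂P
      = ∫ w, (∫ x, e w x ∂P) * conj (∫ y, e w y ∂Q) ∂μW := by
  have h1 : ∀ x, ∫ y, (∫ w, e w (x - y) ∂μW) ∂Q
      = ∫ w, e w x * conj (∫ y, e w y ∂Q) ∂μW := by
    intro x
    simp_rw [e_sub]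
    rw [integral_integral_swap]
    · simp_rw [integral_const_mul, integral_conj]
    · apply int_bdd
      · exact ((cont_e' continuous_snd continuous_const).mul
          (cont_e' continuous_snd continuous_fst).star).aestronglyMeasurable
      · rintro ⟨y, w⟩
        simp only [Function.uncurry_apply_pair]
        rw [norm_mul, norm_e, RCLike.norm_conj, norm_e]
        norm_num
  simp_rw [h1]
  rw [integral_integral_swap]
  · simp_rw [integral_mul_const]
  · apply int_bdd
    · exact ((cont_e' continuous_snd continuous_fst).stronglyMeasurable.mul
        (continuous_star.comp_stronglyMeasurable
          ((sm_phi Q).comp_measurable measurable_snd))).aestronglyMeasurable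
    · rintro ⟨x, w⟩
      simp only [Function.uncurry_apply_pair]
      rw [norm_mul, norm_e, RCLike.norm_conj, one_mul]
      exact norm_phi_le Q w

lemma contu : Continuous (Function.uncurry
    fun (p : EuclideanSpace ℝ (Fin d) × EuclideanSpace ℝ (Fin d))
      (w : EuclideanSpace ℝ (Fin d)) => e w (p.1 - p.2)) := by
  unfold e Function.uncurry
  have h : Continuous fun q : (EuclideanSpace ℝ (Fin d) × EuclideanSpace ℝ (Fin d)) ×
      EuclideanSpace ℝ (Fin d) => (⟪q.2, q.1.1 - q.1.2⟫ : ℝ) :=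
    (continuous_snd).inner ((continuous_fst.fst).sub (continuous_fst.snd))
  exact Complex.continuous_exp.comp ((Complex.continuous_ofReal.comp h).mul continuous_const)

lemma smK (μW : Measure (EuclideanSpace ℝ (Fin d))) [SFinite μW] :
    StronglyMeasurable fun p : EuclideanSpace ℝ (Fin d) × EuclideanSpace ℝ (Fin d) =>
      ∫ w, e w (p.1 - p.2) ∂μW :=
  StronglyMeasurable.integral_prod_right contu.stronglyMeasurable

lemma smK' (μW : Measure (EuclideanSpace ℝ (Fin d))) [SFinite μW] :
    StronglyMeasurable (Function.uncurry
      fun x y : EuclideanSpace ℝ (Fin d) => ∫ w, e w (x - y) ∂μW) :=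
  smK μW

lemma split4 {α : Type*} [MeasurableSpace α] {μ : Measure α} {f g h j : α → ℂ}
    (hf : Integrable f μ) (hg : Integrable g μ) (hh : Integrable h μ) (hj : Integrable j μ) :
    ∫ a, (f a - g a - h a + j a) ∂μ
      = (∫ a, f a ∂μ) - (∫ a, g a ∂μ) - (∫ a, h a ∂μ) + ∫ a, j a ∂μ := by
  have h1 := integral_add (μ := μ) ((hf.sub hg).sub hh) hj
  have h2 := integral_sub (μ := μ) (hf.sub hg) hh
  have h3 := integral_sub (μ := μ) hf hg
  simp only [Pi.sub_apply] at h1 h2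
  rw [h1, h2, h3]

lemma lemB (μW P Q : Measure (EuclideanSpace ℝ (Fin d)))
    [IsProbabilityMeasure μW] [IsProbabilityMeasure P] [IsProbabilityMeasure Q]
    (hreal : ∀ u, (∫ w, e w u ∂μW).im = 0) :
    (∫ w, (∫ x, e w x ∂P) * conj (∫ y, e w y ∂Q) ∂μW).im = 0 := by
  rw [← lemA μW P Q]
  have hKnorm : ∀ x y : EuclideanSpace ℝ (Fin d), ‖∫ w, e w (x - y) ∂μW‖ ≤ 1 := by
    intro x y
    calc ‖∫ w, e w (x - y) ∂μW‖ ≤ ∫ w, ‖e w (x - y)‖ ∂μW := norm_integral_le_integral_norm _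
    _ = 1 := by simp only [norm_e]; simp
  have hint : ∀ x, Integrable (fun y => ∫ w, e w (x - y) ∂μW) Q := by
    intro x
    apply int_bdd
    · exact ((smK μW).comp_measurable (measurable_const.prodMk measurable_id)).aestronglyMeasurable
    · exact fun y => hKnorm x y
  have hin : ∀ x, (∫ y, (∫ w, e w (x - y) ∂μW) ∂Q).im = 0 := by
    intro x
    have h := integral_im (𝕜 := ℂ) (hint x)
    simp only [RCLike.im_to_complex] at h
    rw [← h]
    simp [hreal]
  have hint2 : Integrable (fun x => ∫ y, (∫ w, e w (x - y) ∂μW) ∂Q) P := by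
    apply int_bdd
    · exact (StronglyMeasurable.integral_prod_right (smK' μW)).aestronglyMeasurable
    · intro x
      have h1 : ∫ y, ‖∫ w, e w (x - y) ∂μW‖ ∂Q ≤ ∫ _, (1 : ℝ) ∂Q :=
        integral_mono (hint x).norm (integrable_const 1) (fun y => hKnorm x y)
      have := (norm_integral_le_integral_norm
        (fun y => ∫ w, e w (x - y) ∂μW) (μ := Q)).trans h1
      simpa using this
  have h := integral_im (𝕜 := ℂ) hint2
  simp only [RCLike.im_to_complex] at h
  rw [← h]
  simp [hin]

lemma intFF (μW P Q : Measure (EuclideanSpace ℝ (Fin d)))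
    [IsProbabilityMeasure μW] [IsProbabilityMeasure P] [IsProbabilityMeasure Q] :
    Integrable (fun w => (∫ x, e w x ∂P) * conj (∫ y, e w y ∂Q)) μW := by
  apply int_bdd
  · exact ((sm_phi P).mul
      (continuous_star.comp_stronglyMeasurable (sm_phi Q))).aestronglyMeasurable
  · intro w
    rw [norm_mul, RCLike.norm_conj]
    calc ‖∫ x, e w x ∂P‖ * ‖∫ y, e w y ∂Q‖ ≤ 1 * 1 :=
      mul_le_mul (norm_phi_le P w) (norm_phi_le Q w) (norm_nonneg _) zero_le_one
    _ = 1 := one_mul 1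

end MMDaux

/-- The MMD defined from a translation invariant kernel `k(x,y) = E[exp(i Wᵀ(x-y))]`
(assumed real-valued) equals the expected squared distance of characteristic functions. -/
theorem mmd_eq_expected_charFun_dist
    (d : ℕ)
    (μW P₁ P₂ : Measure (EuclideanSpace ℝ (Fin d)))
    [IsProbabilityMeasure μW] [IsProbabilityMeasure P₁] [IsProbabilityMeasure P₂]
    (k : EuclideanSpace ℝ (Fin d) → EuclideanSpace ℝ (Fin d) → ℂ)
    (hk : ∀ x y, k x y = ∫ w, Complex.exp ((⟪w, x - y⟫ : ℝ) * Complex.I) ∂μW)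
    (hreal : ∀ u : EuclideanSpace ℝ (Fin d),
      (∫ w, Complex.exp ((⟪w, u⟫ : ℝ) * Complex.I) ∂μW).im = 0)
    (Φ₁ Φ₂ : EuclideanSpace ℝ (Fin d) → ℂ)
    (hΦ₁ : ∀ z, Φ₁ z = ∫ x, Complex.exp ((⟪z, x⟫ : ℝ) * Complex.I) ∂P₁)
    (hΦ₂ : ∀ z, Φ₂ z = ∫ x, Complex.exp ((⟪z, x⟫ : ℝ) * Complex.I) ∂P₂) :
    (∫ x, ∫ x', k x x' ∂P₁ ∂P₁) - (∫ x, ∫ y', k x y' ∂P₂ ∂P₁)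
      - (∫ x', ∫ y, k x' y ∂P₂ ∂P₁) + (∫ y, ∫ y', k y y' ∂P₂ ∂P₂)
      = ((∫ w, ‖Φ₁ w - Φ₂ w‖ ^ 2 ∂μW : ℝ) : ℂ) := by
  have key : ∀ (P Q : Measure (EuclideanSpace ℝ (Fin d))),
      ∀ (_ : IsProbabilityMeasure P) (_ : IsProbabilityMeasure Q),
      ∫ x, ∫ y, k x y ∂Q ∂P
        = ∫ w, (∫ x, MMDaux.e w x ∂P) * conj (∫ y, MMDaux.e w y ∂Q) ∂μW := by
    intro P Q hP hQ
    simp_rw [hk]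
    exact MMDaux.lemA μW P Q
  rw [key P₁ P₁ inferInstance inferInstance, key P₁ P₂ inferInstance inferInstance,
    key P₂ P₂ inferInstance inferInstance]
  have hΦe₁ : Φ₁ = fun w => ∫ x, MMDaux.e w x ∂P₁ := funext hΦ₁
  have hΦe₂ : Φ₂ = fun w => ∫ x, MMDaux.e w x ∂P₂ := funext hΦ₂
  simp only [hΦe₁, hΦe₂]
  rw [show ((∫ w, ‖(∫ x, MMDaux.e w x ∂P₁) - (∫ x, MMDaux.e w x ∂P₂)‖ ^ 2 ∂μW : ℝ) : ℂ)
      = ∫ w, ((‖(∫ x, MMDaux.e w x ∂P₁) - (∫ x, MMDaux.e w x ∂P₂)‖ ^ 2 : ℝ) : ℂ) ∂μW from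
      (integral_ofReal).symm]
  have expand : ∀ w, ((‖(∫ x, MMDaux.e w x ∂P₁) - (∫ x, MMDaux.e w x ∂P₂)‖ ^ 2 : ℝ) : ℂ)
      = (∫ x, MMDaux.e w x ∂P₁) * conj (∫ x, MMDaux.e w x ∂P₁)
        - (∫ x, MMDaux.e w x ∂P₁) * conj (∫ x, MMDaux.e w x ∂P₂)
        - (∫ x, MMDaux.e w x ∂P₂) * conj (∫ x, MMDaux.e w x ∂P₁)
        + (∫ x, MMDaux.e w x ∂P₂) * conj (∫ x, MMDaux.e w x ∂P₂) := by
    intro w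
    set a := ∫ x, MMDaux.e w x ∂P₁
    set b := ∫ x, MMDaux.e w x ∂P₂
    rw [show ((‖a - b‖ ^ 2 : ℝ) : ℂ) = (a - b) * conj (a - b) by
      rw [Complex.mul_conj, Complex.normSq_eq_norm_sq]]
    rw [map_sub]
    ring
  simp_rw [expand]
  have i11 := MMDaux.intFF μW P₁ P₁
  have i12 := MMDaux.intFF μW P₁ P₂
  have i21 := MMDaux.intFF μW P₂ P₁
  have i22 := MMDaux.intFF μW P₂ P₂
  rw [MMDaux.split4 i11 i12 i21 i22]
  have h21 : (∫ w, (∫ x, MMDaux.e w x ∂P₂) * conj (∫ x, MMDaux.e w x ∂P₁) ∂μW)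
      = ∫ w, (∫ x, MMDaux.e w x ∂P₁) * conj (∫ x, MMDaux.e w x ∂P₂) ∂μW := by
    have him := MMDaux.lemB μW P₁ P₂ (fun u => hreal u)
    calc ∫ w, (∫ x, MMDaux.e w x ∂P₂) * conj (∫ x, MMDaux.e w x ∂P₁) ∂μW
        = ∫ w, conj ((∫ x, MMDaux.e w x ∂P₁) * conj (∫ x, MMDaux.e w x ∂P₂)) ∂μW := by
          refine integral_congr_ae (Filter.Eventually.of_forall fun w => ?_)
          simp only [map_mul, Complex.conj_conj]
          ring
      _ = conj (∫ w, (∫ x, MMDaux.e w x ∂P₁) * conj (∫ x, MMDaux.e w x ∂P₂) ∂μW) :=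
          integral_conj
      _ = ∫ w, (∫ x, MMDaux.e w x ∂P₁) * conj (∫ x, MMDaux.e w x ∂P₂) ∂μW :=
          Complex.conj_eq_iff_im.mpr him
  rw [h21]
end

section
/- Let W₁,…,W_m ∈ ℝ^d and define the empirical measure P_m^W = (1/m) Σ_{l=1}^m δ_{W_l}. Let P, Q be probability measures on ℝ^d with characteristic functions Φ_P, Φ_Q and let k_m(x,y) = (1/m) Σ_{l=1}^m cos(W_lᵀ(x−y)). Then E[k_m(X,X')] − 2E[k_m(X,Y)] + E[k_m(Y,Y')] = (1/m) Σ_{l=1}^m |Φ_P(W_l) − Φ_Q(W_l)|², where X, X' ∼ P and Y, Y' ∼ Q are mutually independent. In particular this quantity is nonnegative. -/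
open MeasureTheory Complex
open scoped RealInnerProductSpace BigOperators

lemma aux_int_bdd {d : ℕ} {f : EuclideanSpace ℝ (Fin d) → ℝ} (hf : Continuous f)
    (hb : ∀ x, |f x| ≤ 1) (μ : Measure (EuclideanSpace ℝ (Fin d))) [IsProbabilityMeasure μ] :
    Integrable f μ := by
  refine (integrable_const (1 : ℝ)).mono' hf.aestronglyMeasurable ?_
  filter_upwards with x
  simpa using hb x

lemma aux_intCos {d : ℕ} (w : EuclideanSpace ℝ (Fin d)) (μ : Measure (EuclideanSpace ℝ (Fin d)))
    [IsProbabilityMeasure μ] : Integrable (fun x => Real.cos (⟪w, x⟫ : ℝ)) μ :=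
  aux_int_bdd (Real.continuous_cos.comp (continuous_const.inner continuous_id))
    (fun x => Real.abs_cos_le_one _) μ

lemma aux_intSin {d : ℕ} (w : EuclideanSpace ℝ (Fin d)) (μ : Measure (EuclideanSpace ℝ (Fin d)))
    [IsProbabilityMeasure μ] : Integrable (fun x => Real.sin (⟪w, x⟫ : ℝ)) μ :=
  aux_int_bdd (Real.continuous_sin.comp (continuous_const.inner continuous_id))
    (fun x => Real.abs_sin_le_one _) μ

lemma aux_char {d : ℕ} (w : EuclideanSpace ℝ (Fin d)) (μ : Measure (EuclideanSpace ℝ (Fin d)))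
    [IsProbabilityMeasure μ] :
    (∫ x, Complex.exp ((⟪w, x⟫ : ℝ) * Complex.I) ∂μ)
      = ((∫ x, Real.cos (⟪w, x⟫ : ℝ) ∂μ : ℝ) : ℂ)
        + ((∫ x, Real.sin (⟪w, x⟫ : ℝ) ∂μ : ℝ) : ℂ) * Complex.I := by
  have hInt : Integrable (fun x : EuclideanSpace ℝ (Fin d) =>
      Complex.exp ((⟪w, x⟫ : ℝ) * Complex.I)) μ := by
    refine (integrable_const (1 : ℝ)).mono' ?_ ?_
    · exact (((Complex.continuous_ofReal.comp (continuous_const.inner continuous_id)).mul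
        continuous_const).cexp).aestronglyMeasurable
    · filter_upwards with x
      simp only [Complex.norm_exp_ofReal_mul_I, norm_one, le_refl]
  have hre := integral_re (𝕜 := ℂ) hInt
  have him := integral_im (𝕜 := ℂ) hInt
  simp only [RCLike.re_to_complex, RCLike.im_to_complex, Complex.exp_ofReal_mul_I_re,
    Complex.exp_ofReal_mul_I_im] at hre him
  apply Complex.ext <;>
    simp only [Complex.add_re, Complex.add_im, Complex.mul_re, Complex.mul_im, Complex.ofReal_re,
      Complex.ofReal_im, Complex.I_re, Complex.I_im, mul_zero, mul_one, zero_mul, sub_zero,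
      zero_add, zero_sub, add_zero, neg_zero]
  · exact hre.symm
  · exact him.symm

lemma aux_km_double {d m : ℕ} (W : Fin m → EuclideanSpace ℝ (Fin d))
    (km : EuclideanSpace ℝ (Fin d) → EuclideanSpace ℝ (Fin d) → ℝ)
    (hkm : ∀ x y, km x y = (1 / (m : ℝ)) * ∑ l : Fin m, Real.cos (⟪W l, x - y⟫ : ℝ))
    (μ ν : Measure (EuclideanSpace ℝ (Fin d))) [IsProbabilityMeasure μ] [IsProbabilityMeasure ν] :
    ∫ x, ∫ y, km x y ∂ν ∂μ
      = (1 / (m : ℝ)) * ∑ l : Fin m,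
          ((∫ x, Real.cos (⟪W l, x⟫ : ℝ) ∂μ) * (∫ y, Real.cos (⟪W l, y⟫ : ℝ) ∂ν)
            + (∫ x, Real.sin (⟪W l, x⟫ : ℝ) ∂μ) * (∫ y, Real.sin (⟪W l, y⟫ : ℝ) ∂ν)) := by
  have h1 : ∀ x, ∫ y, km x y ∂ν
      = (1 / (m : ℝ)) * ∑ l : Fin m,
          (Real.cos (⟪W l, x⟫ : ℝ) * (∫ y, Real.cos (⟪W l, y⟫ : ℝ) ∂ν)
            + Real.sin (⟪W l, x⟫ : ℝ) * (∫ y, Real.sin (⟪W l, y⟫ : ℝ) ∂ν)) := by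
    intro x
    simp_rw [hkm, inner_sub_right, Real.cos_sub]
    rw [integral_const_mul, integral_finset_sum]
    · congr 1
      refine Finset.sum_congr rfl fun l _ => ?_
      rw [integral_add ((aux_intCos (W l) ν).const_mul _) ((aux_intSin (W l) ν).const_mul _),
        integral_const_mul, integral_const_mul]
    · intro l _
      exact ((aux_intCos (W l) ν).const_mul _).add ((aux_intSin (W l) ν).const_mul _)
  simp_rw [h1]
  rw [integral_const_mul, integral_finset_sum]
  · congr 1
    refine Finset.sum_congr rfl fun l _ => ?_
    rw [integral_add ((aux_intCos (W l) μ).mul_const _) ((aux_intSin (W l) μ).mul_const _),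
      integral_mul_const, integral_mul_const]
  · intro l _
    exact ((aux_intCos (W l) μ).mul_const _).add ((aux_intSin (W l) μ).mul_const _)

lemma aux_norm_sq (a b c e : ℝ) :
    ‖((a : ℂ) + (b : ℂ) * Complex.I) - ((c : ℂ) + (e : ℂ) * Complex.I)‖ ^ 2
      = (a - c) ^ 2 + (b - e) ^ 2 := by
  rw [show ((a : ℂ) + (b : ℂ) * Complex.I) - ((c : ℂ) + (e : ℂ) * Complex.I)
      = ((a - c : ℝ) : ℂ) + ((b - e : ℝ) : ℂ) * Complex.I by push_cast; ring,
    Complex.sq_norm, Complex.normSq_add_mul_I]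

/-- For the empirical kernel `k_m`, the population MMD² equals the average squared distance of
characteristic functions at the sampled frequencies, and in particular is nonnegative. -/
theorem empirical_mmd_sq_eq_charFun_dist
    (d m : ℕ) (hm : 0 < m) (W : Fin m → EuclideanSpace ℝ (Fin d))
    (P Q : Measure (EuclideanSpace ℝ (Fin d)))
    [IsProbabilityMeasure P] [IsProbabilityMeasure Q]
    (ΦP ΦQ : EuclideanSpace ℝ (Fin d) → ℂ)
    (hΦP : ∀ z, ΦP z = ∫ x, Complex.exp ((⟪z, x⟫ : ℝ) * Complex.I) ∂P)
    (hΦQ : ∀ z, ΦQ z = ∫ x, Complex.exp ((⟪z, x⟫ : ℝ) * Complex.I) ∂Q)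
    (km : EuclideanSpace ℝ (Fin d) → EuclideanSpace ℝ (Fin d) → ℝ)
    (hkm : ∀ x y, km x y = (1 / (m : ℝ)) * ∑ l : Fin m, Real.cos (⟪W l, x - y⟫ : ℝ)) :
    (∫ x, ∫ x', km x x' ∂P ∂P) - 2 * (∫ x, ∫ y, km x y ∂Q ∂P)
        + (∫ y, ∫ y', km y y' ∂Q ∂Q)
      = (1 / (m : ℝ)) * ∑ l : Fin m, ‖ΦP (W l) - ΦQ (W l)‖ ^ 2 ∧
    0 ≤ (∫ x, ∫ x', km x x' ∂P ∂P) - 2 * (∫ x, ∫ y, km x y ∂Q ∂P)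
        + (∫ y, ∫ y', km y y' ∂Q ∂Q) := by
  have hnorm : ∀ l : Fin m, ‖ΦP (W l) - ΦQ (W l)‖ ^ 2
      = ((∫ x, Real.cos (⟪W l, x⟫ : ℝ) ∂P) - (∫ x, Real.cos (⟪W l, x⟫ : ℝ) ∂Q)) ^ 2
        + ((∫ x, Real.sin (⟪W l, x⟫ : ℝ) ∂P) - (∫ x, Real.sin (⟪W l, x⟫ : ℝ) ∂Q)) ^ 2 := by
    intro l
    rw [hΦP, hΦQ, aux_char, aux_char, aux_norm_sq]
  have hmain : (∫ x, ∫ x', km x x' ∂P ∂P) - 2 * (∫ x, ∫ y, km x y ∂Q ∂P)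
        + (∫ y, ∫ y', km y y' ∂Q ∂Q)
      = (1 / (m : ℝ)) * ∑ l : Fin m, ‖ΦP (W l) - ΦQ (W l)‖ ^ 2 := by
    rw [aux_km_double W km hkm P P, aux_km_double W km hkm P Q, aux_km_double W km hkm Q Q]
    simp only [Finset.mul_sum, hnorm]
    rw [← Finset.sum_sub_distrib, ← Finset.sum_add_distrib]
    refine Finset.sum_congr rfl fun l _ => ?_
    ring
  refine ⟨hmain, ?_⟩
  rw [hmain]
  positivity
end

section
/- Let P, Q be probability measures on ℝ^d with characteristic functions Φ_P, Φ_Q and let W be a random vector in ℝ^d. If MMD(P,Q)² := E[|Φ_P(W) − Φ_Q(W)|²] = 0 and the support of W is all of ℝ^d, then Φ_P = Φ_Q on ℝ^d, and hence P = Q. -/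
open MeasureTheory Complex Real Filter Bornology
open scoped RealInnerProductSpace Topology NNReal ENNReal

variable {d : ℕ}
local notation "E" => EuclideanSpace ℝ (Fin d)





lemma charFun_cont (μ : Measure E) [IsProbabilityMeasure μ] :
    Continuous (fun z : E => ∫ x, Complex.exp ((⟪z, x⟫ : ℝ) * Complex.I) ∂μ) := by
  apply continuous_of_dominated (bound := fun _ => 1)
  · intro z
    exact (Complex.continuous_exp.comp ((Complex.continuous_ofReal.comp
      (Continuous.inner continuous_const continuous_id)).mul continuous_const)).aestronglyMeasurable
  · intro z; filter_upwards with x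
    simp [Complex.norm_exp]
  · exact integrable_const 1
  · filter_upwards with x
    exact Complex.continuous_exp.comp ((Complex.continuous_ofReal.comp
      (Continuous.inner continuous_id continuous_const)).mul continuous_const)

lemma charFun_norm_le (μ : Measure E) [IsProbabilityMeasure μ] (z : E) :
    ‖∫ x, Complex.exp ((⟪z, x⟫ : ℝ) * Complex.I) ∂μ‖ ≤ 1 := by
  calc ‖∫ x, Complex.exp ((⟪z, x⟫ : ℝ) * Complex.I) ∂μ‖
      ≤ ∫ x, ‖Complex.exp ((⟪z, x⟫ : ℝ) * Complex.I)‖ ∂μ := norm_integral_le_integral_norm _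
    _ = 1 := by simp [Complex.norm_exp]

lemma phi_eq (μW : Measure E) [IsProbabilityMeasure μW]
    (hsupp : ∀ U : Set E, IsOpen U → U.Nonempty → 0 < μW U)
    (ΦP ΦQ : E → ℂ) (hP : Continuous ΦP) (hQ : Continuous ΦQ)
    (hbP : ∀ z, ‖ΦP z‖ ≤ 1) (hbQ : ∀ z, ‖ΦQ z‖ ≤ 1)
    (hzero : ∫ w, ‖ΦP w - ΦQ w‖ ^ 2 ∂μW = 0) : ∀ z, ΦP z = ΦQ z := by
  have hcont : Continuous fun w => ‖ΦP w - ΦQ w‖ ^ 2 := by fun_prop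
  have hint : Integrable (fun w => ‖ΦP w - ΦQ w‖ ^ 2) μW := by
    apply (integrable_const (4 : ℝ)).mono' hcont.aestronglyMeasurable
    filter_upwards with w
    have : ‖ΦP w - ΦQ w‖ ≤ 2 := by
      calc ‖ΦP w - ΦQ w‖ ≤ ‖ΦP w‖ + ‖ΦQ w‖ := norm_sub_le _ _
        _ ≤ 2 := by linarith [hbP w, hbQ w]
    have h0 : (0:ℝ) ≤ ‖ΦP w - ΦQ w‖ := norm_nonneg _
    have h4 : ‖ΦP w - ΦQ w‖ ^ 2 ≤ 4 := by nlinarith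
    simpa [_root_.abs_of_nonneg (sq_nonneg ‖ΦP w - ΦQ w‖)] using h4
  have hae : (fun w => ‖ΦP w - ΦQ w‖ ^ 2) =ᵐ[μW] 0 :=
    (integral_eq_zero_iff_of_nonneg (fun w => sq_nonneg _) hint).mp hzero
  by_contra hne
  push_neg at hne
  obtain ⟨z₀, hz₀⟩ := hne
  set U : Set E := {w | ΦP w ≠ ΦQ w} with hU
  have hUopen : IsOpen U := isOpen_ne_fun hP hQ
  have hUpos : 0 < μW U := hsupp U hUopen ⟨z₀, hz₀⟩
  have : μW U = 0 := by
    have : U ⊆ {w | ¬ ((fun w => ‖ΦP w - ΦQ w‖ ^ 2) w = (0 : E → ℝ) w)} := by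
      intro w hw
      simp only [Set.mem_setOf_eq, Pi.zero_apply, pow_eq_zero_iff, norm_eq_zero, sub_eq_zero]
      simpa [hU, sub_eq_zero] using hw
    exact measure_mono_null this hae
  exact absurd this hUpos.ne'

lemma finrank_E : Module.finrank ℝ (EuclideanSpace ℝ (Fin d)) = d := by
  simp [finrank_euclideanSpace]

noncomputable def NN (d : ℕ) : ℝ := ∫ v : EuclideanSpace ℝ (Fin d), rexp (-‖v‖ ^ 2)

lemma NN_pos : 0 < NN d := by
  have h := GaussianFourier.integral_rexp_neg_mul_sq_norm
    (V := EuclideanSpace ℝ (Fin d)) (b := 1) one_pos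
  rw [NN]
  simp only [neg_mul, one_mul] at h
  rw [h]
  positivity

noncomputable def φG (d : ℕ) : EuclideanSpace ℝ (Fin d) → ℝ :=
  fun v => rexp (-‖v‖ ^ 2) / NN d

lemma φG_nonneg (v : E) : 0 ≤ φG d v := div_nonneg (Real.exp_nonneg _) NN_pos.le

lemma φG_integral : ∫ v : E, φG d v = 1 := by
  simp only [φG, div_eq_mul_inv]
  rw [integral_mul_const, ← NN, mul_inv_cancel₀ NN_pos.ne']

lemma φG_decay :
    Tendsto (fun v : E => ‖v‖ ^ Module.finrank ℝ (EuclideanSpace ℝ (Fin d)) * φG d v)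
      (cobounded (EuclideanSpace ℝ (Fin d))) (𝓝 0) := by
  have key : Tendsto (fun r : ℝ => r ^ d * rexp (-r ^ 2)) atTop (𝓝 0) := by
    have h1 : Tendsto (fun s : ℝ => s ^ d * rexp (-s)) atTop (𝓝 0) :=
      tendsto_pow_mul_exp_neg_atTop_nhds_zero d
    have h2 : Tendsto (fun r : ℝ => r ^ 2) atTop atTop :=
      tendsto_pow_atTop (two_ne_zero)
    have h3 : Tendsto (fun r : ℝ => (r ^ 2) ^ d * rexp (-r ^ 2)) atTop (𝓝 0) := h1.comp h2
    apply squeeze_zero_norm' _ h3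
    filter_upwards [eventually_ge_atTop (1 : ℝ)] with r hr
    have hrpos : (0:ℝ) ≤ r := le_trans zero_le_one hr
    have hle : r ^ d ≤ (r ^ 2) ^ d := by
      apply pow_le_pow_left₀ hrpos
      nlinarith
    have : ‖r ^ d * rexp (-r ^ 2)‖ = r ^ d * rexp (-r ^ 2) := by
      rw [Real.norm_eq_abs, _root_.abs_of_nonneg]
      positivity
    rw [this]
    exact mul_le_mul_of_nonneg_right hle (Real.exp_nonneg _)
  have comp := key.comp
    (tendsto_norm_cobounded_atTop : Tendsto _ (cobounded (EuclideanSpace ℝ (Fin d))) _)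
  rw [finrank_E]
  have := comp.div_const (NN d)
  simpa [φG, Function.comp, div_eq_mul_inv, mul_assoc, zero_div] using this


noncomputable def bC (c : ℝ) : ℂ := (((4 * c ^ 2)⁻¹ : ℝ) : ℂ)

lemma bC_re_pos {c : ℝ} (hc : 0 < c) : 0 < (bC c).re := by
  simp only [bC, Complex.ofReal_re]
  positivity

lemma bC_ne_zero {c : ℝ} (hc : 0 < c) : bC c ≠ 0 := by
  simp only [bC, ne_eq, Complex.ofReal_eq_zero]
  positivity

noncomputable def Cc (d : ℕ) (c : ℝ) : ℂ := ((π : ℂ) / bC c) ^ ((d : ℂ) / 2)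

lemma Cc_ne_zero {c : ℝ} (hc : 0 < c) : Cc d c ≠ 0 := by
  rw [Cc, ne_eq, Complex.cpow_eq_zero_iff]
  push_neg
  intro h
  exact absurd h (div_ne_zero (by exact_mod_cast Real.pi_ne_zero) (bC_ne_zero hc))

noncomputable def γC (d : ℕ) (c : ℝ) : ℂ := ((c ^ d / NN d : ℝ) : ℂ) / Cc d c

lemma kernel_eq {c : ℝ} (hc : 0 < c) (v : E) :
    ((c ^ d * φG d (c • v) : ℝ) : ℂ)
      = γC d c * ∫ z : E, cexp (-(bC c) * ‖z‖ ^ 2 + I * ((⟪v, z⟫ : ℝ) : ℂ)) := by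
  have hgauss := GaussianFourier.integral_cexp_neg_mul_sq_norm_add
    (V := EuclideanSpace ℝ (Fin d)) (bC_re_pos hc) I v
  rw [hgauss]
  have hfr : (Module.finrank ℝ (EuclideanSpace ℝ (Fin d)) : ℂ) = (d : ℂ) := by
    norm_cast; simp [finrank_euclideanSpace]
  rw [hfr, ← Cc]
  have harg : I ^ 2 * (‖v‖ : ℂ) ^ 2 / (4 * bC c) = -((c : ℂ) ^ 2 * (‖v‖ : ℂ) ^ 2) := by
    rw [Complex.I_sq, bC]
    have hc4 : ((4 * c ^ 2)⁻¹ : ℝ) ≠ 0 := by positivity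
    have hc' : (c : ℂ) ≠ 0 := by exact_mod_cast hc.ne'
    push_cast
    field_simp
  rw [harg]
  have hγ : γC d c * Cc d c = ((c ^ d / NN d : ℝ) : ℂ) := by
    rw [γC, div_mul_cancel₀ _ (Cc_ne_zero hc)]
  rw [← mul_assoc, hγ]
  have hnorm : ‖c • v‖ = c * ‖v‖ := by
    rw [norm_smul, Real.norm_eq_abs, _root_.abs_of_pos hc]
  simp only [φG, hnorm, mul_pow]
  rw [← Complex.ofReal_pow, ← Complex.ofReal_pow, ← Complex.ofReal_mul, ← Complex.ofReal_neg,
    ← Complex.ofReal_exp]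
  push_cast
  ring


lemma K_norm {c : ℝ} (z : E) (r : ℝ) :
    ‖cexp (-(bC c) * ‖z‖ ^ 2 + I * (r : ℂ))‖ = rexp (-((4 * c ^ 2)⁻¹ * ‖z‖ ^ 2)) := by
  rw [Complex.norm_exp]
  congr 1
  simp [bC, Complex.add_re, Complex.mul_re, ← Complex.ofReal_pow]

lemma gaussR_integrable {c : ℝ} (hc : 0 < c) :
    Integrable (fun z : E => rexp (-((4 * c ^ 2)⁻¹ * ‖z‖ ^ 2))) volume := by
  have h := (GaussianFourier.integrable_cexp_neg_mul_sq_norm_add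
    (V := EuclideanSpace ℝ (Fin d)) (bC_re_pos hc) 0 0).norm
  apply h.congr
  filter_upwards with z
  simp only [zero_mul, add_zero]
  rw [Complex.norm_exp]
  congr 1
  simp [bC, Complex.add_re, Complex.mul_re, ← Complex.ofReal_pow]

lemma repr_lemma (μ : Measure E) [IsProbabilityMeasure μ] (Φ : E → ℂ)
    (hΦ : ∀ z, Φ z = ∫ x, Complex.exp ((⟪z, x⟫ : ℝ) * I) ∂μ)
    (g : E → ℝ) (hg : Continuous g) (hgs : HasCompactSupport g)
    {c : ℝ} (hc : 0 < c) :
    ((∫ x, (∫ u, (c ^ d * φG d (c • (x - u))) * g u) ∂μ : ℝ) : ℂ)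
      = ∫ p : E × E, (γC d c * (g p.1) *
          cexp (-(bC c) * ‖p.2‖ ^ 2 - ((⟪p.1, p.2⟫ : ℝ) : ℂ) * I)) * Φ p.2
        ∂((volume : Measure (EuclideanSpace ℝ (Fin d))).prod volume) := by
  have hgi : Integrable g (volume : Measure (EuclideanSpace ℝ (Fin d))) :=
    hg.integrable_of_hasCompactSupport hgs
  -- the triple integrand
  set F : E → E × E → ℂ := fun x p =>
    (γC d c * g p.1) * cexp (-(bC c) * ‖p.2‖ ^ 2 + I * ((⟪x - p.1, p.2⟫ : ℝ) : ℂ)) with hF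
  -- bound
  set B : E × E → ℝ := fun p =>
    (‖γC d c‖ * ‖g p.1‖) * rexp (-((4 * c ^ 2)⁻¹ * ‖p.2‖ ^ 2)) with hB
  have hBint : Integrable B ((volume : Measure (EuclideanSpace ℝ (Fin d))).prod volume) :=
    (hgi.norm.const_mul _).mul_prod (gaussR_integrable hc)
  have hFnorm : ∀ x p, ‖F x p‖ = B p := by
    intro x p
    simp only [hF, hB, norm_mul, K_norm]
    rw [Complex.norm_real]
  have hFcont : Continuous (fun q : E × (E × E) => F q.1 q.2) := by
    apply Continuous.mul
    · exact (continuous_const.mul ((Complex.continuous_ofReal.comp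
        (hg.comp (continuous_fst.comp continuous_snd)))))
    · apply Complex.continuous_exp.comp
      apply Continuous.add
      · exact continuous_const.mul ((Complex.continuous_ofReal.comp
          (continuous_norm.comp (continuous_snd.comp continuous_snd))).pow 2)
      · apply continuous_const.mul
        apply Complex.continuous_ofReal.comp
        exact continuous_inner.comp
          (((continuous_fst.sub (continuous_fst.comp continuous_snd))).prodMk
            (continuous_snd.comp continuous_snd))
  have hInt1 : ∀ x : E, Integrable (Function.uncurry (fun u z =>
      (γC d c * g u) * cexp (-(bC c) * ‖z‖ ^ 2 + I * ((⟪x - u, z⟫ : ℝ) : ℂ))))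
      ((volume : Measure (EuclideanSpace ℝ (Fin d))).prod volume) := by
    intro x
    apply hBint.mono'
    · exact (hFcont.comp (Continuous.prodMk continuous_const continuous_id)).aestronglyMeasurable
    · filter_upwards with p
      exact le_of_eq (hFnorm x p)
  have hInt2 : Integrable (Function.uncurry F)
      (μ.prod ((volume : Measure (EuclideanSpace ℝ (Fin d))).prod volume)) := by
    have hBint2 : Integrable (fun q : E × (E × E) => 1 * B q.2)
        (μ.prod ((volume : Measure (EuclideanSpace ℝ (Fin d))).prod volume)) :=
      (integrable_const (1 : ℝ)).mul_prod hBint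
    apply hBint2.mono' hFcont.aestronglyMeasurable
    filter_upwards with q
    rw [one_mul]
    exact le_of_eq (hFnorm q.1 q.2)
  -- Step A: cast to complex
  have cast1 : ((∫ x, (∫ u, (c ^ d * φG d (c • (x - u))) * g u) ∂μ : ℝ) : ℂ)
      = ∫ x, ((∫ u, (c ^ d * φG d (c • (x - u))) * g u : ℝ) : ℂ) ∂μ := (integral_ofReal).symm
  rw [cast1]
  have stepA : ∀ x : E, ((∫ u, (c ^ d * φG d (c • (x - u))) * g u : ℝ) : ℂ)
      = ∫ p : E × E, F x p
        ∂((volume : Measure (EuclideanSpace ℝ (Fin d))).prod volume) := by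
    intro x
    have cast2 : ((∫ u, (c ^ d * φG d (c • (x - u))) * g u : ℝ) : ℂ)
        = ∫ u, (((c ^ d * φG d (c • (x - u))) * g u : ℝ) : ℂ) := (integral_ofReal).symm
    rw [cast2]
    have e1 : ∀ u : E, ((((c ^ d * φG d (c • (x - u))) * g u : ℝ)) : ℂ)
        = ∫ z : E, (γC d c * g u) *
            cexp (-(bC c) * ‖z‖ ^ 2 + I * ((⟪x - u, z⟫ : ℝ) : ℂ)) := by
      intro u
      rw [Complex.ofReal_mul, kernel_eq hc (x - u)]
      have hcomm : (γC d c * ∫ z : E, cexp (-(bC c) * ‖z‖ ^ 2 + I * ((⟪x - u, z⟫ : ℝ) : ℂ)))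
            * ((g u : ℝ) : ℂ)
          = (γC d c * ((g u : ℝ) : ℂ))
            * ∫ z : E, cexp (-(bC c) * ‖z‖ ^ 2 + I * ((⟪x - u, z⟫ : ℝ) : ℂ)) := by ring
      rw [hcomm, ← integral_const_mul]
    rw [integral_congr_ae (Filter.Eventually.of_forall e1)]
    exact integral_integral (hInt1 x)
  rw [integral_congr_ae (Filter.Eventually.of_forall stepA)]
  rw [integral_integral_swap hInt2]
  apply integral_congr_ae
  filter_upwards with p
  -- ∫ x, F x p ∂μ = (γC * g p.1 * cexp (...)) * Φ p.2
  have split : ∀ x : E, F x p = ((γC d c * g p.1) *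
      cexp (-(bC c) * ‖p.2‖ ^ 2 - ((⟪p.1, p.2⟫ : ℝ) : ℂ) * I)) *
      cexp (((⟪p.2, x⟫ : ℝ) : ℂ) * I) := by
    intro x
    simp only [hF]
    conv_rhs => rw [mul_assoc, ← Complex.exp_add]
    congr 2
    rw [inner_sub_left, real_inner_comm x p.2]
    push_cast
    ring
  calc ∫ x, F x p ∂μ
      = ∫ x, ((γC d c * g p.1) *
          cexp (-(bC c) * ‖p.2‖ ^ 2 - ((⟪p.1, p.2⟫ : ℝ) : ℂ) * I)) *
          cexp (((⟪p.2, x⟫ : ℝ) : ℂ) * I) ∂μ := by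
        exact integral_congr_ae (Filter.Eventually.of_forall (fun x => split x))
    _ = ((γC d c * g p.1) *
          cexp (-(bC c) * ‖p.2‖ ^ 2 - ((⟪p.1, p.2⟫ : ℝ) : ℂ) * I)) *
          ∫ x, cexp (((⟪p.2, x⟫ : ℝ) : ℂ) * I) ∂μ := integral_const_mul _ _
    _ = (γC d c * (g p.1) *
          cexp (-(bC c) * ‖p.2‖ ^ 2 - ((⟪p.1, p.2⟫ : ℝ) : ℂ) * I)) * Φ p.2 := by
        rw [← hΦ p.2]


lemma exp_sq_integrable :
    Integrable (fun v : EuclideanSpace ℝ (Fin d) => rexp (-‖v‖ ^ 2)) volume := by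
  have h := (GaussianFourier.integrable_cexp_neg_mul_sq_norm_add
    (V := EuclideanSpace ℝ (Fin d)) (b := 1) (by norm_num) 0 0).norm
  apply h.congr
  filter_upwards with z
  simp only [zero_mul, add_zero]
  rw [Complex.norm_exp]
  congr 1
  simp [Complex.mul_re, ← Complex.ofReal_pow]

lemma φG_integrable : Integrable (φG d) volume := exp_sq_integrable.div_const _

lemma φG_le (v : E) : φG d v ≤ 1 / NN d := by
  rw [φG]
  gcongr
  · exact NN_pos.le
  · exact Real.exp_le_one_iff.mpr (neg_nonpos.mpr (by positivity))

lemma conv_lemma (μ : Measure E) [IsProbabilityMeasure μ]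
    (g : E → ℝ) (hg : Continuous g) (hgs : HasCompactSupport g) :
    Tendsto (fun c : ℝ => ∫ x, (∫ u, (c ^ d * φG d (c • (x - u))) * g u) ∂μ)
      atTop (𝓝 (∫ x, g x ∂μ)) := by
  have hgi : Integrable g (volume : Measure (EuclideanSpace ℝ (Fin d))) :=
    hg.integrable_of_hasCompactSupport hgs
  obtain ⟨C, hC0⟩ := (hg.norm).bounded_above_of_compact_support hgs.norm
  have hC : ∀ x : E, ‖g x‖ ≤ C := fun x => by simpa [norm_norm] using hC0 x
  have hCnn : 0 ≤ C := le_trans (norm_nonneg _) (hC 0)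
  -- kernel integral equals one
  have hker : ∀ {c : ℝ}, 0 < c → ∀ x : E,
      ∫ u, c ^ d * φG d (c • (x - u)) = 1 := by
    intro c hc x
    rw [integral_const_mul]
    have h1 : ∫ u : E, φG d (c • (x - u)) = ∫ u : E, φG d (c • u) :=
      integral_sub_left_eq_self (fun v => φG d (c • v)) volume x
    have h2 : ∫ u : E, φG d (c • u) = |((c ^ d : ℝ))⁻¹| * 1 := by
      have := Measure.integral_comp_smul (volume : Measure (EuclideanSpace ℝ (Fin d)))
        (φG d) c
      rw [this, finrank_E, φG_integral, smul_eq_mul]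
    rw [h1, h2, mul_one, abs_inv, _root_.abs_of_pos (pow_pos hc d),
      mul_inv_cancel₀ (pow_pos hc d).ne']
  -- kernel integrable in u
  have hkint : ∀ {c : ℝ}, 0 < c → ∀ x : E,
      Integrable (fun u : E => c ^ d * φG d (c • (x - u))) volume := by
    intro c hc x
    exact ((φG_integrable.comp_smul hc.ne').comp_sub_left x).const_mul _
  apply tendsto_integral_filter_of_dominated_convergence (bound := fun _ => C)
  · filter_upwards [eventually_gt_atTop (0:ℝ)] with c hc
    apply Continuous.aestronglyMeasurable
    apply continuous_of_dominated (bound := fun u => (c ^ d / NN d) * ‖g u‖)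
    · intro x
      apply Continuous.aestronglyMeasurable
      have : Continuous fun u : E => φG d (c • (x - u)) := by
        simp only [φG]
        fun_prop
      exact (continuous_const.mul this).mul hg
    · intro x
      filter_upwards with u
      rw [norm_mul, norm_mul]
      apply mul_le_mul_of_nonneg_right _ (norm_nonneg _)
      rw [Real.norm_eq_abs, Real.norm_eq_abs, _root_.abs_of_pos (pow_pos hc d),
        _root_.abs_of_nonneg (φG_nonneg _), div_eq_mul_inv]
      exact mul_le_mul_of_nonneg_left
        (le_trans (φG_le _) (le_of_eq (one_div _))) (pow_pos hc d).le
    · exact (hgi.norm.const_mul _)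
    · filter_upwards with u
      have : Continuous fun x : E => φG d (c • (x - u)) := by
        simp only [φG]
        fun_prop
      exact (continuous_const.mul this).mul continuous_const
  · filter_upwards [eventually_gt_atTop (0:ℝ)] with c hc
    filter_upwards with x
    have hFint : Integrable (fun u : E => (c ^ d * φG d (c • (x - u))) * g u) volume := by
      apply (hkint hc x |>.const_mul C).mono'
      · have : Continuous fun u : E => φG d (c • (x - u)) := by
          simp only [φG]; fun_prop
        exact (((continuous_const.mul this).mul hg)).aestronglyMeasurable
      · filter_upwards with u
        have hknn : 0 ≤ c ^ d * φG d (c • (x - u)) :=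
          mul_nonneg (pow_pos hc d).le (φG_nonneg _)
        rw [norm_mul, mul_comm C, Real.norm_eq_abs, _root_.abs_of_nonneg hknn]
        exact mul_le_mul_of_nonneg_left (hC u) hknn
    calc ‖∫ u, (c ^ d * φG d (c • (x - u))) * g u‖
        ≤ ∫ u, ‖(c ^ d * φG d (c • (x - u))) * g u‖ := norm_integral_le_integral_norm _
      _ ≤ ∫ u, (c ^ d * φG d (c • (x - u))) * C := by
          apply integral_mono_of_nonneg
          · filter_upwards with u; exact norm_nonneg _
          · exact (hkint hc x).mul_const C
          · filter_upwards with u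
            rw [norm_mul, Real.norm_eq_abs, _root_.abs_of_nonneg
              (mul_nonneg (pow_pos hc d).le (φG_nonneg _))]
            exact mul_le_mul_of_nonneg_left (hC u)
              (mul_nonneg (pow_pos hc d).le (φG_nonneg _))
      _ = C := by rw [integral_mul_const, hker hc x, one_mul]
  · exact integrable_const C
  · filter_upwards with x
    have h := tendsto_integral_comp_smul_smul_of_integrable'
      (φ := φG d) (μ := (volume : Measure (EuclideanSpace ℝ (Fin d))))
      φG_nonneg φG_integral φG_decay hgi (hg.continuousAt (x := x))
    rw [finrank_E] at h
    simpa only [smul_eq_mul] using h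

lemma meas_ext_of_cc (P Q : Measure E) [IsProbabilityMeasure P] [IsProbabilityMeasure Q]
    (key : ∀ g : EuclideanSpace ℝ (Fin d) → ℝ, Continuous g → HasCompactSupport g →
      ∫ x, g x ∂P = ∫ x, g x ∂Q) : P = Q := by
  apply ext_of_forall_lintegral_eq_of_IsFiniteMeasure
  intro f
  set fR : E → ℝ := fun x => (f x : ℝ) with hfR
  have hfRcont : Continuous fR := NNReal.continuous_coe.comp f.continuous
  have hfRnonneg : ∀ x, 0 ≤ fR x := fun x => (f x).coe_nonneg
  obtain ⟨C, hC⟩ := f.bounded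
  have hCnn : (0:ℝ) ≤ C := le_trans dist_nonneg (hC 0 0)
  set M : ℝ := fR 0 + C with hM
  have hfRbdd : ∀ x, ‖fR x‖ ≤ M := by
    intro x
    have h1 := hC x 0
    rw [NNReal.dist_eq] at h1
    have h2 : |fR x - fR 0| ≤ C := h1
    rw [Real.norm_eq_abs, _root_.abs_of_nonneg (hfRnonneg x)]
    have := abs_le.mp h2
    linarith [this.2]
  have hint : ∀ (μ : Measure E) [IsProbabilityMeasure μ], Integrable fR μ := by
    intro μ _
    apply (integrable_const M).mono' hfRcont.aestronglyMeasurable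
    filter_upwards with x using hfRbdd x
  -- cutoffs
  set χ : ℕ → E → ℝ := fun n x => max 0 (min 1 ((n + 1 : ℝ) - ‖x‖)) with hχ
  have hχcont : ∀ n, Continuous (χ n) :=
    fun n => continuous_const.max (continuous_const.min (continuous_const.sub continuous_norm))
  have hχ01 : ∀ n x, 0 ≤ χ n x ∧ χ n x ≤ 1 := by
    intro n x
    constructor
    · exact le_max_left _ _
    · apply max_le zero_le_one
      exact min_le_left _ _
  have hgcs : ∀ n, HasCompactSupport (fun x : E => fR x * χ n x) := by
    intro n
    apply HasCompactSupport.intro (isCompact_closedBall (0 : E) (n + 1))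
    intro x hx
    have : (n + 1 : ℝ) < ‖x‖ := by
      simpa [Metric.mem_closedBall, dist_zero_right] using hx
    have hz : χ n x = 0 := by
      rw [hχ]
      simp only
      rw [max_eq_left]
      exact min_le_of_right_le (by linarith)
    rw [hz, mul_zero]
  have hlim : ∀ (μ : Measure E) [IsProbabilityMeasure μ],
      Tendsto (fun n => ∫ x, fR x * χ n x ∂μ) atTop (𝓝 (∫ x, fR x ∂μ)) := by
    intro μ _
    apply tendsto_integral_of_dominated_convergence (bound := fun _ => M)
    · intro n
      exact (hfRcont.mul (hχcont n)).aestronglyMeasurable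
    · exact integrable_const _
    · intro n
      filter_upwards with x
      rw [norm_mul]
      calc ‖fR x‖ * ‖χ n x‖ ≤ ‖fR x‖ * 1 := by
            apply mul_le_mul_of_nonneg_left _ (norm_nonneg _)
            rw [Real.norm_eq_abs, _root_.abs_of_nonneg (hχ01 n x).1]
            exact (hχ01 n x).2
        _ ≤ M := by rw [mul_one]; exact hfRbdd x
    · filter_upwards with x
      have : ∀ᶠ n : ℕ in atTop, fR x * χ n x = fR x := by
        filter_upwards [eventually_ge_atTop (Nat.ceil ‖x‖)] with n hn
        have hone : χ n x = 1 := by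
          rw [hχ]
          simp only
          have h1 : (1:ℝ) ≤ (n + 1 : ℝ) - ‖x‖ := by
            have : ‖x‖ ≤ (n : ℝ) := le_trans (Nat.le_ceil _) (by exact_mod_cast hn)
            linarith
          rw [min_eq_left h1, max_eq_right zero_le_one]
        rw [hone, mul_one]
      exact tendsto_const_nhds.congr' (by filter_upwards [this] with n h using h.symm)
  have heq : ∫ x, fR x ∂P = ∫ x, fR x ∂Q := by
    apply tendsto_nhds_unique (hlim P)
    have : ∀ n, ∫ x, fR x * χ n x ∂P = ∫ x, fR x * χ n x ∂Q :=
      fun n => key _ (hfRcont.mul (hχcont n)) (hgcs n)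
    exact (hlim Q).congr (fun n => (this n).symm)
  rw [lintegral_coe_eq_integral f (hint P), lintegral_coe_eq_integral f (hint Q)]
  exact congrArg ENNReal.ofReal heq

/-- If `MMD(P,Q)² = E[|Φ_P(W) - Φ_Q(W)|²] = 0` and `W` has full support, then the
characteristic functions agree everywhere and hence `P = Q`. -/
theorem mmd_eq_zero_imp_eq
    (d : ℕ) (μW P Q : Measure (EuclideanSpace ℝ (Fin d)))
    [IsProbabilityMeasure μW] [IsProbabilityMeasure P] [IsProbabilityMeasure Q]
    (hsupp : ∀ U : Set (EuclideanSpace ℝ (Fin d)), IsOpen U → U.Nonempty → 0 < μW U)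
    (ΦP ΦQ : EuclideanSpace ℝ (Fin d) → ℂ)
    (hΦP : ∀ z, ΦP z = ∫ x, Complex.exp ((⟪z, x⟫ : ℝ) * Complex.I) ∂P)
    (hΦQ : ∀ z, ΦQ z = ∫ x, Complex.exp ((⟪z, x⟫ : ℝ) * Complex.I) ∂Q)
    (hzero : ∫ w, ‖ΦP w - ΦQ w‖ ^ 2 ∂μW = 0) :
    (∀ z, ΦP z = ΦQ z) ∧ P = Q := by
  have hcontP : Continuous ΦP := by
    have h : ΦP = fun z => ∫ x, Complex.exp ((⟪z, x⟫ : ℝ) * Complex.I) ∂P := funext hΦP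
    rw [h]; exact charFun_cont P
  have hcontQ : Continuous ΦQ := by
    have h : ΦQ = fun z => ∫ x, Complex.exp ((⟪z, x⟫ : ℝ) * Complex.I) ∂Q := funext hΦQ
    rw [h]; exact charFun_cont Q
  have hbP : ∀ z, ‖ΦP z‖ ≤ 1 := fun z => by rw [hΦP z]; exact charFun_norm_le P z
  have hbQ : ∀ z, ‖ΦQ z‖ ≤ 1 := fun z => by rw [hΦQ z]; exact charFun_norm_le Q z
  have hΦeq : ∀ z, ΦP z = ΦQ z :=
    phi_eq μW hsupp ΦP ΦQ hcontP hcontQ hbP hbQ hzero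
  refine ⟨hΦeq, ?_⟩
  apply meas_ext_of_cc P Q
  intro g hg hgs
  have hΦfun : ΦP = ΦQ := funext hΦeq
  have key : ∀ {c : ℝ}, 0 < c →
      (∫ x, (∫ u, (c ^ d * φG d (c • (x - u))) * g u) ∂P)
        = (∫ x, (∫ u, (c ^ d * φG d (c • (x - u))) * g u) ∂Q) := by
    intro c hc
    have hrP := repr_lemma P ΦP hΦP g hg hgs hc
    have hrQ := repr_lemma Q ΦQ hΦQ g hg hgs hc
    rw [hΦfun] at hrP
    exact_mod_cast hrP.trans hrQ.symm
  have h1 := conv_lemma P g hg hgs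
  have h2 := conv_lemma Q g hg hgs
  apply tendsto_nhds_unique h1
  apply h2.congr'
  filter_upwards [eventually_gt_atTop (0:ℝ)] with c hc
  exact (key hc).symm
end
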